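/- Let Γ be a metabelian group and suppose a, b ∈ Γ are l-Engel elements. Then every x ∈ ⟨a,b⟩ is a (2l+1)-Engel element. -/

import Mathlib

/-- The left-normed long commutator `[x, y, y, …, y]` (`y` repeated `n` times),
with the convention `[a,b] = a⁻¹b⁻¹ab`. -/
def engel {G : Type*} [Group G] (x y : G) : ℕ → G
  | 0 => x
  | n + 1 => (engel x y n)⁻¹ * y⁻¹ * engel x y n * y

open scoped commutatorElement IsMulCommutative

namespace Stmt10Aux

variable {Γ : Type*} [Group Γ]

lemma engel_succ_eq (z x : Γ) (n : ℕ) :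
    engel z x (n + 1) = engel (z⁻¹ * x⁻¹ * z * x) x n := by
  induction n with
  | zero => rfl
  | succ n ih =>
    show (engel z x (n+1))⁻¹ * x⁻¹ * engel z x (n+1) * x
      = (engel (z⁻¹ * x⁻¹ * z * x) x n)⁻¹ * x⁻¹ * engel (z⁻¹ * x⁻¹ * z * x) x n * x
    rw [ih]

lemma engel_mem {c : Γ} (hc : c ∈ commutator Γ) (x : Γ) :
    ∀ n, engel c x n ∈ commutator Γ
  | 0 => hc
  | n + 1 => by
    show (engel c x n)⁻¹ * x⁻¹ * engel c x n * x ∈ commutator Γ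
    have h : (engel c x n)⁻¹ * x⁻¹ * engel c x n * x = ⁅(engel c x n)⁻¹, x⁻¹⁆ := by group
    rw [h]
    exact Subgroup.commutator_mem_commutator (Subgroup.mem_top _) (Subgroup.mem_top _)

variable [hC : IsMulCommutative (commutator Γ)]

set_option linter.unusedSectionVars false

/-- Conjugation by `g` as an additive endomorphism of the (abelian) commutator subgroup. -/
def σ (g : Γ) : AddMonoid.End (Additive ↥(commutator Γ)) :=
  AddMonoidHom.mk'
    (fun c => Additive.ofMul (⟨g⁻¹ * ((Additive.toMul c : ↥(commutator Γ)) : Γ) * g, by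
      simpa using Subgroup.Normal.conj_mem inferInstance _ (Additive.toMul c).2 g⁻¹⟩ :
        ↥(commutator Γ)))
    (fun c d => by
      apply Additive.toMul.injective
      apply Subtype.ext
      show g⁻¹ * (((Additive.toMul c : ↥(commutator Γ)) : Γ) * ((Additive.toMul d : ↥(commutator Γ)) : Γ)) * g
        = (g⁻¹ * _ * g) * (g⁻¹ * _ * g)
      group)

lemma σ_apply (g : Γ) (c : ↥(commutator Γ)) :
    σ g (Additive.ofMul c) = Additive.ofMul (⟨g⁻¹ * (c : Γ) * g, by
      simpa using Subgroup.Normal.conj_mem inferInstance _ c.2 g⁻¹⟩ : ↥(commutator Γ)) := rfl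

lemma σ_mul (g h : Γ) : σ (g * h : Γ) = σ h * σ g := by
  refine AddMonoidHom.ext fun c => ?_
  apply Additive.toMul.injective
  apply Subtype.ext
  show (g*h)⁻¹ * _ * (g*h) = h⁻¹ * (g⁻¹ * _ * g) * h
  group

lemma σ_one : σ (1 : Γ) = 1 := by
  refine AddMonoidHom.ext fun c => ?_
  apply Additive.toMul.injective
  apply Subtype.ext
  show (1:Γ)⁻¹ * ((Additive.toMul c : ↥(commutator Γ)) : Γ) * 1
    = ((Additive.toMul c : ↥(commutator Γ)) : Γ)
  group

lemma σ_of_mem {k : Γ} (hk : k ∈ commutator Γ) : σ k = 1 := by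
  refine AddMonoidHom.ext fun c => ?_
  apply Additive.toMul.injective
  apply Subtype.ext
  show k⁻¹ * ((Additive.toMul c : ↥(commutator Γ)) : Γ) * k
    = ((Additive.toMul c : ↥(commutator Γ)) : Γ)
  have h := Subgroup.mul_comm_of_mem_isMulCommutative (commutator Γ) hk (Additive.toMul c).2
  rw [mul_assoc, ← h, inv_mul_cancel_left]

lemma σ_commute (g h : Γ) : Commute (σ g) (σ h) := by
  have e1 : σ g * σ h = σ (h * g) := (σ_mul h g).symm
  have e2 : σ h * σ g = σ (g * h) := (σ_mul g h).symm
  have h1 : g * h = (h * g) * ⁅g⁻¹, h⁻¹⁆ := by group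
  have e3 : σ (g * h) = σ (h * g) := by
    rw [h1, σ_mul,
      σ_of_mem (Subgroup.commutator_mem_commutator (Subgroup.mem_top _) (Subgroup.mem_top _)),
      one_mul]
  show σ g * σ h = σ h * σ g
  rw [e1, e2, e3]

lemma engel_σ (c : ↥(commutator Γ)) (x : Γ) (n : ℕ) :
    ((σ x - 1) ^ n) (Additive.ofMul c)
      = Additive.ofMul (⟨engel (c : Γ) x n, engel_mem c.2 x n⟩ : ↥(commutator Γ)) := by
  induction n with
  | zero => rfl
  | succ n ih =>
    rw [pow_succ']
    show (σ x - 1) (((σ x - 1) ^ n) (Additive.ofMul c)) = _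
    rw [ih]
    have hs : (σ x - 1) (Additive.ofMul (⟨engel (c:Γ) x n, engel_mem c.2 x n⟩ : ↥(commutator Γ)))
        = σ x (Additive.ofMul (⟨engel (c:Γ) x n, engel_mem c.2 x n⟩ : ↥(commutator Γ)))
          - Additive.ofMul (⟨engel (c:Γ) x n, engel_mem c.2 x n⟩ : ↥(commutator Γ)) := rfl
    rw [hs, σ_apply]
    apply Additive.toMul.injective
    apply Subtype.ext
    show (x⁻¹ * engel (c:Γ) x n * x) / (engel (c:Γ) x n)
      = (engel (c:Γ) x n)⁻¹ * x⁻¹ * engel (c:Γ) x n * x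
    rw [div_eq_mul_inv]
    have hmem : x⁻¹ * engel (c:Γ) x n * x ∈ commutator Γ := by
      simpa using Subgroup.Normal.conj_mem inferInstance _ (engel_mem c.2 x n) x⁻¹
    rw [Subgroup.mul_comm_of_mem_isMulCommutative (commutator Γ) hmem
      (inv_mem (engel_mem c.2 x n))]
    group

lemma σ_engel_zero {y : Γ} {m : ℕ} (hy : ∀ z : Γ, engel z y m = 1) :
    (σ y - 1) ^ m = 0 := by
  refine AddMonoidHom.ext fun u => ?_
  have h1 := engel_σ (Additive.toMul u) y m
  have h2 : (⟨engel ((Additive.toMul u : ↥(commutator Γ)) : Γ) y m,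
      engel_mem (Additive.toMul u).2 y m⟩ : ↥(commutator Γ)) = 1 := Subtype.ext (hy _)
  rw [h2] at h1
  exact h1

end Stmt10Aux

namespace Stmt10Aux

lemma ringA {R : Type*} [Ring R] (A B : R) : A = 1 + (A - 1) * 1 + (B - 1) * 0 := by
  noncomm_ring

lemma ringB {R : Type*} [Ring R] (A B : R) : B = 1 + (A - 1) * 0 + (B - 1) * 1 := by
  noncomm_ring

lemma ringOne {R : Type*} [Ring R] (A B : R) : (1 : R) = 1 + (A - 1) * 0 + (B - 1) * 0 := by
  noncomm_ring

lemma ringMul {R : Type*} [Ring R] (A B p q p' q' : R) :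
    (1 + A * p' + B * q') * (1 + A * p + B * q)
      = 1 + A * (p + p' + p' * (A * p + B * q)) + B * (q + q' + q' * (A * p + B * q)) := by
  noncomm_ring

lemma ringInv {R : Type*} [Ring R] (A B s p q : R)
    (hA : s * (A * p) = A * (s * p)) (hB : s * (B * q) = B * (s * q))
    (h : s * (1 + A * p + B * q) = 1) :
    s = 1 + A * (-(s * p)) + B * (-(s * q)) := by
  have h3 : s + A * (s * p) + B * (s * q) = 1 := by
    calc s + A * (s * p) + B * (s * q) = s * (1 + A * p + B * q) := by
          rw [← hA, ← hB]; noncomm_ring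
      _ = 1 := h
  calc s = (s + A * (s * p) + B * (s * q)) + A * (-(s * p)) + B * (-(s * q)) := by noncomm_ring
    _ = 1 + A * (-(s * p)) + B * (-(s * q)) := by rw [h3]

lemma ringSub {R : Type*} [Ring R] (w v : R) : (1 + w + v) - 1 = w + v := by noncomm_ring

lemma ringPow {R : Type*} [Ring R] (n1 n2 p q : R) (l' : ℕ)
    (h1 : n1 ^ (l' + 1) = 0) (h2 : n2 ^ (l' + 1) = 0)
    (c1 : Commute n1 p) (c2 : Commute n2 q) (c3 : Commute (n1 * p) (n2 * q)) :
    (n1 * p + n2 * q) ^ (2 * (l' + 1)) = 0 := by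
  have key : (n1 * p + n2 * q) ^ (2 * l' + 1) = 0 := by
    rw [c3.add_pow]
    apply Finset.sum_eq_zero
    intro i hi
    rcases le_or_gt i l' with h | h
    · have h5 : l' + 1 ≤ 2 * l' + 1 - i := by omega
      rw [c2.mul_pow, pow_eq_zero_of_le h5 h2, zero_mul, mul_zero, zero_mul]
    · rw [c1.mul_pow, pow_eq_zero_of_le h h1, zero_mul, zero_mul, zero_mul]
  have h6 : 2 * (l' + 1) = (2 * l' + 1) + 1 := by ring
  rw [h6, pow_succ, key, zero_mul]

end Stmt10Aux


set_option maxHeartbeats 1000000 in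
/-- In a metabelian group, if `a` and `b` are `l`-Engel elements then every element of
`⟨a, b⟩` is a `(2l+1)`-Engel element. -/
theorem stmt_10 {Γ : Type*} [Group Γ] (hmet : derivedSeries Γ 2 = ⊥)
    (l : ℕ) (a b : Γ)
    (ha : ∀ x : Γ, engel x a l = 1) (hb : ∀ x : Γ, engel x b l = 1) :
    ∀ x ∈ Subgroup.closure ({a, b} : Set Γ), ∀ z : Γ, engel z x (2 * l + 1) = 1 := by
  have hcommG : ∀ p q : Γ, p ∈ commutator Γ → q ∈ commutator Γ → p * q = q * p := by
    intro p q hp hq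
    have h1 : ⁅p, q⁆ ∈ derivedSeries Γ 2 := by
      rw [derivedSeries_succ, derivedSeries_one]
      exact Subgroup.commutator_mem_commutator hp hq
    rw [hmet] at h1
    exact commutatorElement_eq_one_iff_commute.mp (Subgroup.mem_bot.mp h1)
  haveI : IsMulCommutative (commutator Γ) := ⟨⟨fun p q => Subtype.ext (hcommG _ _ p.2 q.2)⟩⟩
  intro x hx z
  rcases l with _ | l'
  · have h1 : ∀ g : Γ, g = 1 := ha
    show z⁻¹ * x⁻¹ * z * x = 1
    rw [h1 z, h1 x]; group
  · have hna : (Stmt10Aux.σ a - 1) ^ (l' + 1) = 0 := Stmt10Aux.σ_engel_zero ha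
    have hnb : (Stmt10Aux.σ b - 1) ^ (l' + 1) = 0 := Stmt10Aux.σ_engel_zero hb
    set R₀ := Subring.closure (Set.range (Stmt10Aux.σ (Γ := Γ))) with hR₀def
    have hc1 : ∀ g : Γ, ∀ q ∈ R₀, Commute (Stmt10Aux.σ g) q := by
      intro g q hq
      refine Subring.closure_induction ?_ ?_ ?_ ?_ ?_ ?_ hq
      · rintro x' ⟨h', rfl⟩; exact Stmt10Aux.σ_commute g h'
      · exact Commute.zero_right _
      · exact Commute.one_right _
      · exact fun x' y' _ _ h1 h2 => h1.add_right h2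
      · exact fun x' _ h1 => h1.neg_right
      · exact fun x' y' _ _ h1 h2 => h1.mul_right h2
    have hc2 : ∀ p ∈ R₀, ∀ q ∈ R₀, Commute p q := by
      intro p hp q hq
      refine Subring.closure_induction ?_ ?_ ?_ ?_ ?_ ?_ hp
      · rintro x' ⟨g, rfl⟩; exact hc1 g q hq
      · exact Commute.zero_left _
      · exact Commute.one_left _
      · exact fun x' y' _ _ h1 h2 => h1.add_left h2
      · exact fun x' _ h1 => h1.neg_left
      · exact fun x' y' _ _ h1 h2 => h1.mul_left h2
    have hna_mem : (Stmt10Aux.σ a - 1) ∈ R₀ :=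
      sub_mem (Subring.subset_closure ⟨a, rfl⟩) (one_mem _)
    have hnb_mem : (Stmt10Aux.σ b - 1) ∈ R₀ :=
      sub_mem (Subring.subset_closure ⟨b, rfl⟩) (one_mem _)
    have hrep : ∀ y ∈ Subgroup.closure ({a, b} : Set Γ),
        ∃ p q : AddMonoid.End (Additive ↥(commutator Γ)), p ∈ R₀ ∧ q ∈ R₀ ∧
          Stmt10Aux.σ y = 1 + (Stmt10Aux.σ a - 1) * p + (Stmt10Aux.σ b - 1) * q := by
      intro y hy
      refine Subgroup.closure_induction ?_ ?_ ?_ ?_ hy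
      · rintro y' hy'
        rcases hy' with rfl | rfl
        · exact ⟨1, 0, one_mem _, zero_mem _, Stmt10Aux.ringA _ _⟩
        · exact ⟨0, 1, zero_mem _, one_mem _, Stmt10Aux.ringB _ _⟩
      · exact ⟨0, 0, zero_mem _, zero_mem _, by
          rw [Stmt10Aux.σ_one]; exact Stmt10Aux.ringOne _ _⟩
      · rintro u v hu hv ⟨p, q, hp, hq, hσu⟩ ⟨p', q', hp', hq', hσv⟩
        refine ⟨p + p' + p' * ((Stmt10Aux.σ a - 1) * p + (Stmt10Aux.σ b - 1) * q),
          q + q' + q' * ((Stmt10Aux.σ a - 1) * p + (Stmt10Aux.σ b - 1) * q),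
          add_mem (add_mem hp hp') (mul_mem hp'
            (add_mem (mul_mem hna_mem hp) (mul_mem hnb_mem hq))),
          add_mem (add_mem hq hq') (mul_mem hq'
            (add_mem (mul_mem hna_mem hp) (mul_mem hnb_mem hq))), ?_⟩
        rw [Stmt10Aux.σ_mul, hσu, hσv]
        exact Stmt10Aux.ringMul _ _ _ _ _ _
      · rintro u hu ⟨p, q, hp, hq, hσu⟩
        have hinv : Stmt10Aux.σ u⁻¹ * Stmt10Aux.σ u = 1 := by
          rw [← Stmt10Aux.σ_mul, mul_inv_cancel, Stmt10Aux.σ_one]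
        have cA : Stmt10Aux.σ u⁻¹ * ((Stmt10Aux.σ a - 1) * p)
            = (Stmt10Aux.σ a - 1) * (Stmt10Aux.σ u⁻¹ * p) := by
          rw [← mul_assoc, ((Stmt10Aux.σ_commute u⁻¹ a).sub_right (Commute.one_right _)).eq,
            mul_assoc]
        have cB : Stmt10Aux.σ u⁻¹ * ((Stmt10Aux.σ b - 1) * q)
            = (Stmt10Aux.σ b - 1) * (Stmt10Aux.σ u⁻¹ * q) := by
          rw [← mul_assoc, ((Stmt10Aux.σ_commute u⁻¹ b).sub_right (Commute.one_right _)).eq,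
            mul_assoc]
        have h : Stmt10Aux.σ u⁻¹ * (1 + (Stmt10Aux.σ a - 1) * p + (Stmt10Aux.σ b - 1) * q)
            = 1 := by rw [← hσu]; exact hinv
        exact ⟨-(Stmt10Aux.σ u⁻¹ * p), -(Stmt10Aux.σ u⁻¹ * q),
          neg_mem (mul_mem (Subring.subset_closure ⟨u⁻¹, rfl⟩) hp),
          neg_mem (mul_mem (Subring.subset_closure ⟨u⁻¹, rfl⟩) hq),
          Stmt10Aux.ringInv _ _ _ _ _ cA cB h⟩
    obtain ⟨p, q, hp, hq, hσx⟩ := hrep x hx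
    have hux : Stmt10Aux.σ x - 1 = (Stmt10Aux.σ a - 1) * p + (Stmt10Aux.σ b - 1) * q := by
      rw [hσx]; exact Stmt10Aux.ringSub _ _
    have hA' : Commute (Stmt10Aux.σ a - 1) p := hc2 _ hna_mem _ hp
    have hB' : Commute (Stmt10Aux.σ b - 1) q := hc2 _ hnb_mem _ hq
    have hcomAB : Commute ((Stmt10Aux.σ a - 1) * p) ((Stmt10Aux.σ b - 1) * q) :=
      hc2 _ (mul_mem hna_mem hp) _ (mul_mem hnb_mem hq)
    have hu2 : (Stmt10Aux.σ x - 1) ^ (2 * (l' + 1)) = 0 := by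
      rw [hux]
      exact Stmt10Aux.ringPow _ _ _ _ l' hna hnb hA' hB' hcomAB
    rw [Stmt10Aux.engel_succ_eq]
    have hmemc : z⁻¹ * x⁻¹ * z * x ∈ commutator Γ := by
      have h6 : z⁻¹ * x⁻¹ * z * x = ⁅z⁻¹, x⁻¹⁆ := by group
      rw [h6]
      exact Subgroup.commutator_mem_commutator (Subgroup.mem_top _) (Subgroup.mem_top _)
    have h7 := Stmt10Aux.engel_σ (⟨_, hmemc⟩ : ↥(commutator Γ)) x (2 * (l' + 1))
    rw [hu2] at h7
    have h8 := congrArg (fun w => ((Additive.toMul w : ↥(commutator Γ)) : Γ)) h7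
    simpa using h8.symm
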